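/- If the reference distribution p̄ is uniform on a finite output space Z, then the RLHF-optimal policy p*(z) = p̄(z) exp(r(z)/β)/G is β-perfectly aligned with the Bradley-Terry preference oracle induced by r: for all z, z', exp(r(z))/(exp(r(z)) + exp(r(z'))) = p*(z)^β/(p*(z)^β + p*(z')^β). -/
import Mathlib


theorem stmt_6 {Z : Type*} [Fintype Z] [Nonempty Z] (r : Z → ℝ) (β : ℝ) (hβ : 0 < β)
    (pbar : Z → ℝ) (hpbar : ∀ z, pbar z = 1 / (Fintype.card Z : ℝ))
    (G : ℝ) (hG : G = ∑ z', pbar z' * Real.exp (r z' / β))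
    (pstar : Z → ℝ) (hpstar : ∀ z, pstar z = pbar z * Real.exp (r z / β) / G) :
    ∀ z z', Real.exp (r z) / (Real.exp (r z) + Real.exp (r z')) =
      (pstar z) ^ β / ((pstar z) ^ β + (pstar z') ^ β) := by
  intro z z'
  have hn : (0 : ℝ) < (Fintype.card Z : ℝ) := by
    exact_mod_cast Fintype.card_pos
  have hpb : ∀ w, (0:ℝ) < pbar w := by
    intro w; rw [hpbar]; positivity
  have hGpos : 0 < G := by
    rw [hG]
    apply Finset.sum_pos
    · intro i _; exact mul_pos (hpb i) (Real.exp_pos _)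
    · exact Finset.univ_nonempty
  set k : ℝ := pbar (Classical.arbitrary Z) / G with hk
  have hkpos : 0 < k := div_pos (hpb _) hGpos
  have hps : ∀ w, pstar w ^ β = k ^ β * Real.exp (r w) := by
    intro w
    have h1 : pstar w = k * Real.exp (r w / β) := by
      rw [hpstar, hk, hpbar, hpbar]; ring
    rw [h1, Real.mul_rpow hkpos.le (Real.exp_pos _).le,
      ← Real.exp_one_rpow (r w / β), ← Real.rpow_mul (Real.exp_pos 1).le,
      div_mul_cancel₀ _ hβ.ne', Real.exp_one_rpow]
  have hkβ : 0 < k ^ β := Real.rpow_pos_of_pos hkpos β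
  rw [hps, hps, ← mul_add, mul_div_mul_left _ _ hkβ.ne']
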